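/- If the moduli satisfy deg m_0 ≤ deg m_1 ≤ ... ≤ deg m_{n-1}, the minimum Hamming distance of the irreducible polynomial remainder code C equals n − k + 1. -/

import Mathlib

open Polynomial

open scoped Classical

private lemma fin_le_strictMono {k : ℕ} (f : Fin k → ℕ) (hf : StrictMono f) :
    ∀ j : Fin k, (j : ℕ) ≤ f j := by
  have key : ∀ v : ℕ, ∀ h : v < k, v ≤ f ⟨v, h⟩ := by
    intro v
    induction v with
    | zero => intro h; exact Nat.zero_le _
    | succ v ih =>
      intro h
      have hv : v < k := Nat.lt_of_succ_lt h
      have : f ⟨v, hv⟩ < f ⟨v + 1, h⟩ := hf (by simp [Fin.lt_def])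
      have := ih hv
      omega
  intro j
  simpa using key j.val j.isLt

private lemma filter_lt_eq_map {n k : ℕ} (hkn : k ≤ n) :
    Finset.univ.filter (fun i : Fin n => (i : ℕ) < k) =
      Finset.univ.map (Fin.castLEEmb hkn) := by
  ext i
  simp only [Finset.mem_filter, Finset.mem_univ, true_and, Finset.mem_map]
  constructor
  · intro h
    refine ⟨⟨(i : ℕ), h⟩, ?_⟩
    ext
    simp [Fin.castLEEmb]
  · rintro ⟨j, rfl⟩
    simpa [Fin.castLEEmb] using j.isLt

/-- Key sorted-sum lemma: for a monotone `d` and `S ⊆ Fin n` of card `k`,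
the sum of `d` over the first `k` indices is at most the sum over `S`. -/
private lemma sorted_sum_le {n k : ℕ} (hkn : k ≤ n) (d : Fin n → ℕ)
    (hd : ∀ i j : Fin n, i ≤ j → d i ≤ d j) (S : Finset (Fin n)) (hS : S.card = k) :
    ∑ i ∈ Finset.univ.filter (fun i : Fin n => (i : ℕ) < k), d i ≤ ∑ i ∈ S, d i := by
  rw [filter_lt_eq_map hkn, Finset.sum_map]
  have e := S.orderEmbOfFin hS
  have hSim : S = Finset.univ.map (S.orderEmbOfFin hS).toEmbedding := by
    ext i
    simp only [Finset.mem_map, Finset.mem_univ, true_and]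
    constructor
    · intro hi
      have : i ∈ Set.range (S.orderEmbOfFin hS) := by
        rw [S.range_orderEmbOfFin hS]; exact hi
      obtain ⟨j, hj⟩ := this
      exact ⟨j, hj⟩
    · rintro ⟨j, rfl⟩
      exact S.orderEmbOfFin_mem hS j
  rw [hSim, Finset.sum_map]
  apply Finset.sum_le_sum
  intro j _
  apply hd
  have hmono : StrictMono (fun j : Fin k => ((S.orderEmbOfFin hS j : Fin n) : ℕ)) :=
    fun a b hab => (S.orderEmbOfFin hS).strictMono hab
  have := fin_le_strictMono _ hmono j
  simpa [Fin.le_def] using this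

/-- Under the ordered-degree condition, the minimum Hamming distance of the
irreducible polynomial remainder code equals `n - k + 1`: `n - k + 1` is the
least element of the set of Hamming distances between distinct codewords. -/
theorem stmt_5 {F : Type*} [Field F] (n k : ℕ) (hk1 : 1 ≤ k) (hkn : k ≤ n)
    (m : Fin n → F[X]) (hm : ∀ i, (m i).Monic) (hirr : ∀ i, Irreducible (m i))
    (hinj : Function.Injective m)
    (hord : ∀ i j : Fin n, i ≤ j → (m i).natDegree ≤ (m j).natDegree)
    (K : ℕ)
    (hK : K = ∑ i ∈ Finset.univ.filter (fun i : Fin n => (i : ℕ) < k), (m i).natDegree) :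
    IsLeast {d : ℕ | ∃ a b : F[X], a.degree < (K : WithBot ℕ) ∧
        b.degree < (K : WithBot ℕ) ∧ a ≠ b ∧
        d = (Finset.univ.filter (fun i => ¬ m i ∣ (a - b))).card}
      (n - k + 1) := by
  have hdpos : ∀ i, 0 < (m i).natDegree := fun i => (hirr i).natDegree_pos
  have hne : ∀ i, m i ≠ 0 := fun i => (hm i).ne_zero
  -- dvd between different moduli is impossible
  have hdvd_eq : ∀ i j : Fin n, m i ∣ m j → i = j := by
    intro i j hij
    have hassoc := (hirr i).associated_of_dvd (hirr j) hij
    exact hinj (Polynomial.eq_of_monic_of_associated (hm i) (hm j) hassoc)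
  constructor
  · -- membership: witness a = product of first k-1 moduli, b = 0
    set T' : Finset (Fin n) := Finset.univ.filter (fun i : Fin n => (i : ℕ) < k - 1) with hT'
    refine ⟨∏ i ∈ T', m i, 0, ?_, ?_, ?_, ?_⟩
    · -- degree < K
      have hamonic : (∏ i ∈ T', m i).Monic := Polynomial.monic_prod_of_monic _ _ fun i _ => hm i
      rw [Polynomial.degree_eq_natDegree hamonic.ne_zero]
      rw [Nat.cast_lt (α := WithBot ℕ)]
      rw [Polynomial.natDegree_prod _ _ fun i _ => hne i, hK]
      refine Finset.sum_lt_sum_of_subset ?_ (i := ⟨k - 1, by omega⟩) ?_ ?_ (hdpos _)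
        (fun j _ _ => Nat.zero_le _)
      · intro i hi
        simp only [hT', Finset.mem_filter, Finset.mem_univ, true_and] at hi ⊢
        omega
      · simp; omega
      · simp [hT']
    · rw [Polynomial.degree_zero]
      exact_mod_cast WithBot.bot_lt_coe (K : ℕ)
    · exact Polynomial.Monic.ne_zero (Polynomial.monic_prod_of_monic _ _ fun i _ => hm i)
    · -- the cardinality is n - k + 1
      rw [sub_zero]
      have hdvd_iff : ∀ i : Fin n, m i ∣ ∏ j ∈ T', m j ↔ i ∈ T' := by
        intro i
        constructor
        · intro h
          have hprime : Prime (m i) := (hirr i).prime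
          obtain ⟨j, hj, hij⟩ := hprime.exists_mem_finset_dvd h
          rwa [hdvd_eq i j hij]
        · exact fun h => Finset.dvd_prod_of_mem _ h
      have : (Finset.univ.filter (fun i => ¬ m i ∣ ∏ j ∈ T', m j)) =
          Finset.univ.filter (fun i : Fin n => ¬ (i : ℕ) < k - 1) := by
        apply Finset.filter_congr
        intro i _
        rw [hdvd_iff i]
        simp only [hT', Finset.mem_filter, Finset.mem_univ, true_and]
      rw [this]
      have hcard : (Finset.univ.filter (fun i : Fin n => (i : ℕ) < k - 1)).card = k - 1 := by
        rw [filter_lt_eq_map (by omega : k - 1 ≤ n)]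
        simp
      have := Finset.card_filter_add_card_filter_not
        (s := (Finset.univ : Finset (Fin n))) (p := fun i : Fin n => (i : ℕ) < k - 1)
      rw [hcard, Finset.card_univ, Fintype.card_fin] at this
      omega
  · -- lower bound
    rintro d ⟨a, b, ha, hb, hab, rfl⟩
    set c := a - b with hc
    have hcne : c ≠ 0 := sub_ne_zero.mpr hab
    have hcdeg : c.natDegree < K := by
      have : c.degree < (K : WithBot ℕ) :=
        lt_of_le_of_lt (Polynomial.degree_sub_le a b) (max_lt ha hb)
      rwa [Polynomial.degree_eq_natDegree hcne, Nat.cast_lt] at this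
    set S : Finset (Fin n) := Finset.univ.filter (fun i => m i ∣ c) with hS
    have hprod : (∏ i ∈ S, m i) ∣ c := by
      apply Finset.prod_dvd_of_coprime
      · intro i _ j _ hij
        simp only [Function.onFun]
        rw [(hirr i).coprime_iff_not_dvd]
        intro hd
        exact hij (hdvd_eq i j hd)
      · intro i hi
        exact (Finset.mem_filter.mp hi).2
    have hsum : ∑ i ∈ S, (m i).natDegree ≤ c.natDegree := by
      have := Polynomial.natDegree_le_of_dvd hprod hcne
      rwa [Polynomial.natDegree_prod _ _ fun i _ => hne i] at this
    have hScard : S.card < k := by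
      by_contra h
      push_neg at h
      obtain ⟨S', hS'sub, hS'card⟩ := Finset.exists_subset_card_eq h
      have h1 : ∑ i ∈ Finset.univ.filter (fun i : Fin n => (i : ℕ) < k), (m i).natDegree ≤
          ∑ i ∈ S', (m i).natDegree := sorted_sum_le hkn _ hord S' hS'card
      have h2 : ∑ i ∈ S', (m i).natDegree ≤ ∑ i ∈ S, (m i).natDegree :=
        Finset.sum_le_sum_of_subset hS'sub
      omega
    have := Finset.card_filter_add_card_filter_not
      (s := (Finset.univ : Finset (Fin n))) (p := fun i : Fin n => m i ∣ c)
    rw [Finset.card_univ, Fintype.card_fin] at this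
    rw [← hS] at this
    omega
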